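/- Let E be a finite-dimensional real inner product space and let S ≤ T be subspaces of E (i.e., S is contained in T). Then for every b ∈ E, the distance from b to T is at most the distance from b to S, and equality dist(b, T) = dist(b, S) holds if and only if b belongs to the subspace S + T^⊥ (the sum of S and the orthogonal complement of T). -/

import Mathlib

open Metric
open scoped RealInnerProductSpace

lemma infDist_eq_norm_sub_proj {E : Type*} [NormedAddCommGroup E] [InnerProductSpace ℝ E]
    [FiniteDimensional ℝ E] (U : Submodule ℝ E) (b : E) :
    Metric.infDist b (U : Set E) = ‖b - Submodule.orthogonalProjectionOnto U b‖ := by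
  rw [← Submodule.starProjection_apply, Submodule.starProjection_minimal, Metric.infDist_eq_iInf]
  simp [dist_eq_norm]

/-- For nested subspaces `S ≤ T` of a finite-dimensional real inner product
space, enlarging the subspace can only decrease the distance from a point,
and the distance stays equal exactly on the subspace `S ⊔ Tᗮ`. -/
theorem dist_le_of_le_and_eq_iff_mem_sup_orthogonal
    {E : Type*} [NormedAddCommGroup E] [InnerProductSpace ℝ E]
    [FiniteDimensional ℝ E]
    (S T : Submodule ℝ E) (hST : S ≤ T) (b : E) :
    Metric.infDist b (T : Set E) ≤ Metric.infDist b (S : Set E) ∧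
      (Metric.infDist b (T : Set E) = Metric.infDist b (S : Set E) ↔
        b ∈ S ⊔ Tᗮ) := by
  have hle : Metric.infDist b (T : Set E) ≤ Metric.infDist b (S : Set E) :=
    Metric.infDist_le_infDist_of_subset hST ⟨0, S.zero_mem⟩
  refine ⟨hle, ?_⟩
  rw [infDist_eq_norm_sub_proj, infDist_eq_norm_sub_proj]
  set pT : E := (Submodule.orthogonalProjectionOnto T b : E) with hpT
  set pS : E := (Submodule.orthogonalProjectionOnto S b : E) with hpS
  -- Pythagoras: b - pS = (b - pT) + (pT - pS), orthogonal pieces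
  have horth : ⟪b - pT, pT - pS⟫ = 0 := by
    have h1 : b - pT ∈ Tᗮ := Submodule.sub_starProjection_mem_orthogonal b
    have h2 : pT - pS ∈ T := T.sub_mem (Submodule.orthogonalProjectionOnto T b).2 (hST (Submodule.orthogonalProjectionOnto S b).2)
    rw [real_inner_comm]
    exact (Submodule.mem_orthogonal T (b - pT)).mp h1 _ h2
  have hsplit : b - pS = (b - pT) + (pT - pS) := by abel
  have hpyth : ‖b - pS‖ ^ 2 = ‖b - pT‖ ^ 2 + ‖pT - pS‖ ^ 2 := by
    rw [hsplit]
    rw [norm_add_sq_real, horth]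
    ring
  constructor
  · intro h
    have h2 : ‖pT - pS‖ ^ 2 = 0 := by
      rw [← h] at hpyth; nlinarith
    have hps : pT = pS := by
      have := pow_eq_zero_iff (n := 2) (by norm_num) |>.mp h2
      rwa [norm_sub_eq_zero_iff] at this
    -- b = pS + (b - pT)
    have : b = pS + (b - pT) := by rw [← hps]; abel
    rw [this]
    exact Submodule.add_mem_sup (Submodule.orthogonalProjectionOnto S b).2
      (Submodule.sub_starProjection_mem_orthogonal (K := T) b)
  · intro hb
    obtain ⟨s, hs, r, hr, rfl⟩ := Submodule.mem_sup.mp hb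
    have hT : (Submodule.orthogonalProjectionOnto T (s + r) : E) = s := by
      rw [map_add, Submodule.orthogonalProjectionOnto_apply_of_mem_orthogonal hr,
        add_zero]
      exact Submodule.starProjection_eq_self_iff (K := T) |>.mpr (hST hs)
    have hS : (Submodule.orthogonalProjectionOnto S (s + r) : E) = s := by
      have hrS : r ∈ Sᗮ := Submodule.orthogonal_le hST hr
      rw [map_add, Submodule.orthogonalProjectionOnto_apply_of_mem_orthogonal hrS,
        add_zero]
      exact Submodule.starProjection_eq_self_iff (K := S) |>.mpr hs
    rw [hpT, hpS, hT, hS]
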